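/- Let (X, ≤) be a chain-complete partially ordered set with least element ⊥ and let F be a nonempty commutative family of chain-continuous maps from X to itself. If s is a least upper bound of the set {φ ⊥ : φ ∈ iter F}, then s is a common fixed point of F (f s = s for all f ∈ F) and s is the least element of the set of common fixed points: s ≤ u for every u ∈ X with f u = u for all f ∈ F. -/

import Mathlib

/-- The composition closure of a family `F` of self-maps: all finite compositions
`f₁ ∘ ⋯ ∘ fₙ` with `n ≥ 1` and each `fᵢ ∈ F`. -/
inductive IterClosure {X : Type*} (F : Set (X → X)) : (X → X) → Prop
  | base {f : X → X} : f ∈ F → IterClosure F f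
  | comp {f φ : X → X} : f ∈ F → IterClosure F φ → IterClosure F (f ∘ φ)

/-- In a chain-complete poset with least element `bot`, for a nonempty
commutative family `F` of chain-continuous self-maps, a least upper bound `s` of
`{φ bot : φ ∈ iter F}` is a common fixed point of `F` and is the least such. -/
theorem stmt_3 {X : Type*} [PartialOrder X]
    (hcc : ∀ C : Set X, IsChain (· ≤ ·) C → ∃ s, IsLUB C s)
    (bot : X) (hbot : ∀ x : X, bot ≤ x)
    (F : Set (X → X)) (hF : F.Nonempty)
    (hcont : ∀ f ∈ F, ∀ C : Set X, C.Nonempty → IsChain (· ≤ ·) C →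
      ∀ x, IsLUB C x → IsLUB (f '' C) (f x))
    (hcomm : ∀ f ∈ F, ∀ g ∈ F, f ∘ g = g ∘ f)
    (s : X)
    (hs : IsLUB {y : X | ∃ φ : X → X, IterClosure F φ ∧ y = φ bot} s) :
    (∀ f ∈ F, f s = s) ∧ ∀ u : X, (∀ f ∈ F, f u = u) → s ≤ u := by
  -- continuity implies monotonicity
  have mono_of_cont : ∀ f : X → X, (∀ C : Set X, C.Nonempty → IsChain (· ≤ ·) C →
      ∀ x, IsLUB C x → IsLUB (f '' C) (f x)) → Monotone f := by
    intro f hf x y hxy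
    have hchain : IsChain (· ≤ ·) ({x, y} : Set X) := by
      intro a ha b hb _
      rcases ha with rfl | rfl <;> rcases hb with rfl | rfl
      · exact Or.inl le_rfl
      · exact Or.inl hxy
      · exact Or.inr hxy
      · exact Or.inl le_rfl
    have hlub : IsLUB ({x, y} : Set X) y := by
      constructor
      · intro a ha
        rcases ha with rfl | rfl
        · exact hxy
        · exact le_rfl
      · intro a ha
        exact ha (by simp)
    have h := hf {x, y} ⟨x, by simp⟩ hchain y hlub
    exact h.1 ⟨x, by simp, rfl⟩
  -- iterates are chain-continuous
  have iter_cont : ∀ φ, IterClosure F φ → ∀ C : Set X, C.Nonempty → IsChain (· ≤ ·) C →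
      ∀ x, IsLUB C x → IsLUB (φ '' C) (φ x) := by
    intro φ hφ
    induction hφ with
    | base hf => exact hcont _ hf
    | @comp f ψ hf hψ ih =>
      intro C hne hch x hx
      have hm := mono_of_cont _ ih
      have h1 := ih C hne hch x hx
      have h2 := hcont _ hf (ψ '' C) (hne.image _)
        (hch.image_of_map_rel _ _ _ (fun a b h => hm h)) _ h1
      simpa [Set.image_image, Function.comp] using h2
  have iter_mono : ∀ φ, IterClosure F φ → Monotone φ :=
    fun φ h => mono_of_cont _ (iter_cont φ h)
  -- iterates commute with members of F
  have iter_comm : ∀ φ, IterClosure F φ → ∀ f ∈ F, φ ∘ f = f ∘ φ := by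
    intro φ hφ
    induction hφ with
    | @base g hg => intro f hf; exact hcomm _ hg _ hf
    | @comp g ψ hg hψ ih =>
      intro f hf
      calc (g ∘ ψ) ∘ f = g ∘ (ψ ∘ f) := rfl
        _ = g ∘ (f ∘ ψ) := by rw [ih f hf]
        _ = (g ∘ f) ∘ ψ := rfl
        _ = (f ∘ g) ∘ ψ := by rw [hcomm _ hg _ hf]
        _ = f ∘ (g ∘ ψ) := rfl
  -- common fixed points are fixed by all iterates
  have iter_fix : ∀ φ, IterClosure F φ → ∀ u : X, (∀ f ∈ F, f u = u) → φ u = u := by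
    intro φ hφ u hu
    induction hφ with
    | @base g hg => exact hu g hg
    | @comp g ψ hg hψ ih =>
      show g (ψ u) = u
      rw [ih, hu g hg]
  -- second conjunct: s is below every common fixed point
  have part2 : ∀ u : X, (∀ f ∈ F, f u = u) → s ≤ u := by
    intro u hu
    apply hs.2
    rintro y ⟨φ, hφ, rfl⟩
    calc φ bot ≤ φ u := iter_mono φ hφ (hbot u)
      _ = u := iter_fix φ hφ u hu
  -- the auxiliary set W
  set W : Set X := {x | x ≤ s ∧ (∀ φ, IterClosure F φ → φ x ≤ s) ∧ ∀ f ∈ F, x ≤ f x} with hW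
  have hbotW : bot ∈ W :=
    ⟨hbot s, fun φ hφ => hs.1 ⟨φ, hφ, rfl⟩, fun f _ => hbot _⟩
  have hfW : ∀ f ∈ F, ∀ x ∈ W, f x ∈ W := by
    intro f hf x hx
    refine ⟨hx.2.1 f (IterClosure.base hf), ?_, ?_⟩
    · intro φ hφ
      have : φ (f x) = (f ∘ φ) x := by
        rw [← Function.comp_apply (f := φ), iter_comm φ hφ f hf]
      rw [this]
      exact hx.2.1 (f ∘ φ) (IterClosure.comp hf hφ)
    · intro g hg
      have h1 : f x ≤ f (g x) := mono_of_cont _ (hcont f hf) (hx.2.2 g hg)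
      have h2 : f (g x) = g (f x) := by
        have := hcomm f hf g hg
        exact congrFun this x
      rw [h2] at h1
      exact h1
  -- W is closed under suprema of nonempty chains
  have hWchain : ∀ C ⊆ W, IsChain (· ≤ ·) C → C.Nonempty → ∀ t, IsLUB C t → t ∈ W := by
    intro C hsub hch hne t ht
    refine ⟨?_, ?_, ?_⟩
    · exact ht.2 fun c hc => (hsub hc).1
    · intro φ hφ
      have h := iter_cont φ hφ C hne hch t ht
      apply h.2
      rintro y ⟨c, hc, rfl⟩
      exact (hsub hc).2.1 φ hφ
    · intro f hf
      have h := hcont f hf C hne hch t ht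
      apply ht.2
      intro c hc
      calc c ≤ f c := (hsub hc).2.2 f hf
        _ ≤ f t := h.1 ⟨c, hc, rfl⟩
  -- Zorn: a maximal chain inside W
  obtain ⟨M, hbotM, hM⟩ := zorn_subset_nonempty
    {C : Set X | C ⊆ W ∧ IsChain (· ≤ ·) C}
    (by
      intro c hc hchain hcne
      refine ⟨⋃₀ c, ⟨?_, ?_⟩, fun A hA => Set.subset_sUnion_of_mem hA⟩
      · rintro x ⟨A, hA, hxA⟩
        exact (hc hA).1 hxA
      · rintro x ⟨A, hA, hxA⟩ y ⟨B, hB, hyB⟩ hxy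
        rcases hchain.total hA hB with h | h
        · exact (hc hB).2 (h hxA) hyB hxy
        · exact (hc hA).2 hxA (h hyB) hxy)
    {bot} (by
      refine ⟨?_, ?_⟩
      · intro x hx; rw [Set.mem_singleton_iff] at hx; subst hx; exact hbotW
      · exact Set.Subsingleton.isChain (Set.subsingleton_singleton))
  have hMW : M ⊆ W := hM.1.1
  have hMch : IsChain (· ≤ ·) M := hM.1.2
  have hMne : M.Nonempty := ⟨bot, hbotM (Set.mem_singleton bot)⟩
  obtain ⟨t, ht⟩ := hcc M hMch
  have htW : t ∈ W := hWchain M hMW hMch hMne t ht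
  -- t is a common fixed point
  have hfix : ∀ f ∈ F, f t = t := by
    intro f hf
    have hftW : f t ∈ W := hfW f hf t htW
    have hle : t ≤ f t := htW.2.2 f hf
    have hins : insert (f t) M ∈ {C : Set X | C ⊆ W ∧ IsChain (· ≤ ·) C} := by
      constructor
      · intro x hx
        rcases hx with rfl | hx
        · exact hftW
        · exact hMW hx
      · exact hMch.insert (fun m hm _ => Or.inr (le_trans (ht.1 hm) hle))
    have := hM.2 hins (Set.subset_insert _ _)
    have hmem : f t ∈ M := this (Set.mem_insert _ _)
    exact le_antisymm (ht.1 hmem) hle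
  have hst : s = t := le_antisymm (part2 t hfix) htW.1
  constructor
  · intro f hf
    rw [hst]
    exact hfix f hf
  · exact part2
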